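/- Let d ≥ 1, ω ∈ ℝ^d, and let A : ℝ → ℝ^{3×3} be continuous with skew-symmetric values. Let Φ : ℝ → ℝ^{3×3} solve Φ'(θ) = A(θ)Φ(θ), Φ(0) = I. Suppose U, Û : ℝ → SO(3) are entrywise quasiperiodic with tune vector (1,ω) ∈ ℝ^{d+1} and ν, ν̂ ∈ [0,1) are such that Φ(θ) = U(θ) exp(𝒥νθ) U(0)ᵀ = Û(θ) exp(𝒥ν̂θ) Û(0)ᵀ for all θ ∈ ℝ. Then there exist ε ∈ {−1, 1} and m ∈ ℤ^{d+1} such that ν̂ = εν + m·(1,ω). -/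

import Mathlib

open MeasureTheory Filter
noncomputable section

/-- The matrix 𝒥: (2,1)-entry 1, (1,2)-entry −1, all other entries 0. -/
def Jmat : Matrix (Fin 3) (Fin 3) ℝ := Matrix.of ![![0, -1, 0], ![1, 0, 0], ![0, 0, 0]]

/-- The special orthogonal group SO(3): RᵀR = I and det R = 1. -/
def SO3 : Set (Matrix (Fin 3) (Fin 3) ℝ) := {R | R.transpose * R = 1 ∧ R.det = 1}

/-- 2π-periodicity in each of the k arguments. -/
def Periodic2Pi {k : ℕ} {E : Type*} (F : (Fin k → ℝ) → E) : Prop :=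
  ∀ (z : Fin k → ℝ) (i : Fin k), F (Function.update z i (z i + 2 * Real.pi)) = F z

/-- `f : ℝ → E` is quasiperiodic with tune vector `ν ∈ ℝ^k` if `f θ = F (νθ)` for a
continuous `F` that is 2π-periodic in each argument. -/
def IsQuasiperiodic {E : Type*} [TopologicalSpace E] {k : ℕ} (ν : Fin k → ℝ) (f : ℝ → E) : Prop :=
  ∃ F : (Fin k → ℝ) → E, Continuous F ∧ Periodic2Pi F ∧ ∀ θ : ℝ, f θ = F fun i => ν i * θ

/-- integer dot product `m · v` -/
def zdot {k : ℕ} (m : Fin k → ℤ) (v : Fin k → ℝ) : ℝ := ∑ i, (m i : ℝ) * v i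

/-- `ν` is nonresonant if `m · ν = 0` only for `m = 0`. -/
def Nonresonant {k : ℕ} (ν : Fin k → ℝ) : Prop :=
  ∀ m : Fin k → ℤ, zdot m ν = 0 → m = 0

/-- Fourier coefficient `F_m = (2π)^{-k} ∫_{[0,2π]^k} F(z) e^{-i m·z} dz`. -/
def mFourierCoeff {k : ℕ} (F : (Fin k → ℝ) → ℂ) (m : Fin k → ℤ) : ℂ :=
  ((2 * Real.pi) ^ k : ℝ)⁻¹ •
    ∫ z in Set.Icc (0 : Fin k → ℝ) (fun _ => 2 * Real.pi),
      F z * Complex.exp (-Complex.I * ∑ i, (m i : ℝ) * z i)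

/-- The phase space `ℝ × ℝ^d` of pairs `(θ, φ)`. -/
abbrev Pt (d : ℕ) := ℝ × (Fin d → ℝ)

/-- The vector `(1, ω) ∈ ℝ^{d+1}`. -/
def oneOmega {d : ℕ} (ω : Fin d → ℝ) : Fin (d + 1) → ℝ := Fin.cons 1 ω

/-- max norm `‖m‖ = max_i |m_i|` of an integer vector. -/
def intNorm {k : ℕ} (m : Fin k → ℤ) : ℕ := Finset.univ.sup fun i => (m i).natAbs

/-- The Diophantine set `Ω(τ) = ⋃_{γ ∈ (0,1]} Ω(τ,γ)` where
`Ω(τ,γ) = {ω : |m·(1,ω)| ≥ γ‖m‖^{-τ} for all nonzero m ∈ ℤ^{d+1}}`. -/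
def DiophSet (d : ℕ) (τ : ℝ) : Set (Fin d → ℝ) :=
  ⋃ γ ∈ Set.Ioc (0 : ℝ) 1,
    {ω | ∀ m : Fin (d + 1) → ℤ, m ≠ 0 → γ * (intNorm m : ℝ) ^ (-τ) ≤ |zdot m (oneOmega ω)|}

/-- The derivation 𝒟 applied to the entries of a matrix-valued function:
`(𝒟V)(p) = ∂_θ V + ω·∇_φ V`, i.e. the directional derivative along `(1, ω)`. -/
def Dmat {d : ℕ} (ω : Fin d → ℝ) (V : Pt d → Matrix (Fin 3) (Fin 3) ℝ) (p : Pt d) :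
    Matrix (Fin 3) (Fin 3) ℝ :=
  Matrix.of fun i j => fderiv ℝ (fun q => V q i j) p (1, ω)

/-- Periodicity: 2π-periodic in θ and in each component of φ. -/
def PeriodicPt {d : ℕ} {E : Type*} (f : Pt d → E) : Prop :=
  (∀ p : Pt d, f (p.1 + 2 * Real.pi, p.2) = f p) ∧
  (∀ (p : Pt d) (i : Fin d), f (p.1, Function.update p.2 i (p.2 i + 2 * Real.pi)) = f p)

/-- A matrix-valued map on `ℝ × ℝ^d` is of class `C^n` (entrywise). -/
def SmoothMat {d : ℕ} (n : ℕ∞) (V : Pt d → Matrix (Fin 3) (Fin 3) ℝ) : Prop :=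
  ∀ i j, ContDiff ℝ n fun p => V p i j

/-- `Φ` is the principal solution matrix at `φ₀`:
`∂_θ Φ(θ) = 𝒜(θ, ωθ + φ₀) Φ(θ)`, `Φ(0) = I`. -/
def IsPrincipalSolution {d : ℕ} (ω : Fin d → ℝ) (𝒜 : Pt d → Matrix (Fin 3) (Fin 3) ℝ)
    (φ₀ : Fin d → ℝ) (Φ : ℝ → Matrix (Fin 3) (Fin 3) ℝ) : Prop :=
  Φ 0 = 1 ∧ ∀ (θ : ℝ) (i j : Fin 3),
    HasDerivAt (fun t => Φ t i j) ((𝒜 (θ, fun l => ω l * θ + φ₀ l) * Φ θ) i j) θ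

/-- A uniform invariant frame field: C¹, 2π-periodic, SO(3)-valued, satisfying
`𝒟𝒱 = 𝒜𝒱 − ν𝒱𝒥` for a constant `ν ∈ [0,1)`. -/
def IsUniformIFF {d : ℕ} (ω : Fin d → ℝ) (𝒜 V : Pt d → Matrix (Fin 3) (Fin 3) ℝ) (ν : ℝ) :
    Prop :=
  SmoothMat 1 V ∧ PeriodicPt V ∧ (∀ p, V p ∈ SO3) ∧ ν ∈ Set.Ico (0 : ℝ) 1 ∧
  ∀ p, Dmat ω V p = 𝒜 p * V p - ν • (V p * Jmat)

/-- An invariant frame field: C¹, 2π-periodic, SO(3)-valued, whose third column 𝔳³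
satisfies `𝒟𝔳³ = 𝒜𝔳³`. -/
def IsIFF {d : ℕ} (ω : Fin d → ℝ) (𝒜 V : Pt d → Matrix (Fin 3) (Fin 3) ℝ) : Prop :=
  SmoothMat 1 V ∧ PeriodicPt V ∧ (∀ p, V p ∈ SO3) ∧
  ∀ (p : Pt d) (i : Fin 3),
    fderiv ℝ (fun q => V q i 2) p (1, ω) = ((𝒜 p).mulVec fun j => V p j 2) i

/-- An invariant spin field: C¹, 2π-periodic, unit length, satisfying `𝒟n = 𝒜n`. -/
def IsISF {d : ℕ} (ω : Fin d → ℝ) (𝒜 : Pt d → Matrix (Fin 3) (Fin 3) ℝ)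
    (n : Pt d → Fin 3 → ℝ) : Prop :=
  (∀ i, ContDiff ℝ 1 fun p => n p i) ∧ PeriodicPt n ∧ (∀ p, ∑ i, n p i ^ 2 = 1) ∧
  ∀ (p : Pt d) (i : Fin 3), fderiv ℝ (fun q => n q i) p (1, ω) = ((𝒜 p).mulVec (n p)) i

/-- cross product on ℝ³ -/
def cross3 (u v : Fin 3 → ℝ) : Fin 3 → ℝ :=
  ![u 1 * v 2 - u 2 * v 1, u 2 * v 0 - u 0 * v 2, u 0 * v 1 - u 1 * v 0]

/-- Euclidean norm on ℝ³ -/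
def nrm3 (v : Fin 3 → ℝ) : ℝ := Real.sqrt (∑ i, v i ^ 2)

/-- normalization of a vector in ℝ³ -/
def unitize (v : Fin 3 → ℝ) : Fin 3 → ℝ := fun i => v i / nrm3 v

/-- the matrix with columns a, b, c -/
def colMat (a b c : Fin 3 → ℝ) : Matrix (Fin 3) (Fin 3) ℝ := (Matrix.of ![a, b, c]).transpose

/- ===== auxiliary development ===== -/

def Pmat : Matrix (Fin 3) (Fin 3) ℝ := Matrix.of ![![1, 0, 0], ![0, 1, 0], ![0, 0, 0]]
def Emat : Matrix (Fin 3) (Fin 3) ℝ := Matrix.of ![![0, 0, 0], ![0, 0, 0], ![0, 0, 1]]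
def Rot (s : ℝ) : Matrix (Fin 3) (Fin 3) ℝ := Real.cos s • Pmat + Real.sin s • Jmat + Emat

lemma PJ : Pmat * Jmat = Jmat := by
  ext i j; fin_cases i <;> fin_cases j <;>
    simp [Jmat, Pmat, Matrix.mul_apply, Fin.sum_univ_three, Matrix.vecHead, Matrix.vecTail,
      Function.comp]
lemma JJ : Jmat * Jmat = -Pmat := by
  ext i j; fin_cases i <;> fin_cases j <;>
    simp [Jmat, Pmat, Matrix.mul_apply, Fin.sum_univ_three, Matrix.neg_apply,
      Matrix.vecHead, Matrix.vecTail, Function.comp]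
lemma EJ : Emat * Jmat = 0 := by
  ext i j; fin_cases i <;> fin_cases j <;>
    simp [Jmat, Emat, Matrix.mul_apply, Fin.sum_univ_three, Matrix.vecHead, Matrix.vecTail,
      Function.comp]
lemma RotJ (s : ℝ) : Rot s * Jmat = (-Real.sin s) • Pmat + Real.cos s • Jmat := by
  rw [Rot, add_mul, add_mul, smul_mul_assoc, smul_mul_assoc, PJ, JJ, EJ, add_zero,
    smul_neg, neg_smul]
  abel
lemma Rot_neg_mul (s : ℝ) : Rot (-s) * Rot s = 1 := by
  ext i j; fin_cases i <;> fin_cases j <;>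
    simp [Rot, Jmat, Emat, Pmat, Matrix.mul_apply, Fin.sum_univ_three, Matrix.one_apply,
      Matrix.vecHead, Matrix.vecTail, Function.comp] <;>
    nlinarith [Real.sin_sq_add_cos_sq s]
lemma Rot_zero : Rot 0 = 1 := by
  ext i j; fin_cases i <;> fin_cases j <;>
    simp [Rot, Jmat, Emat, Pmat, Matrix.one_apply, Matrix.vecHead, Matrix.vecTail, Function.comp]

lemma hRotDeriv (s : ℝ) :
    letI : SeminormedRing (Matrix (Fin 3) (Fin 3) ℝ) := Matrix.linftyOpSemiNormedRing
    letI : NormedRing (Matrix (Fin 3) (Fin 3) ℝ) := Matrix.linftyOpNormedRing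
    letI : NormedAlgebra ℝ (Matrix (Fin 3) (Fin 3) ℝ) := Matrix.linftyOpNormedAlgebra
    HasDerivAt Rot (Rot s * Jmat) s := by
  letI : SeminormedRing (Matrix (Fin 3) (Fin 3) ℝ) := Matrix.linftyOpSemiNormedRing
  letI : NormedRing (Matrix (Fin 3) (Fin 3) ℝ) := Matrix.linftyOpNormedRing
  letI : NormedAlgebra ℝ (Matrix (Fin 3) (Fin 3) ℝ) := Matrix.linftyOpNormedAlgebra
  rw [RotJ]
  exact (((Real.hasDerivAt_cos s).smul_const Pmat).add
      ((Real.hasDerivAt_sin s).smul_const Jmat)).add_const Emat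

lemma expJ (s : ℝ) : NormedSpace.exp (s • Jmat) = Rot s := by
  letI : SeminormedRing (Matrix (Fin 3) (Fin 3) ℝ) := Matrix.linftyOpSemiNormedRing
  letI : NormedRing (Matrix (Fin 3) (Fin 3) ℝ) := Matrix.linftyOpNormedRing
  letI : NormedAlgebra ℝ (Matrix (Fin 3) (Fin 3) ℝ) := Matrix.linftyOpNormedAlgebra
  have key : ∀ t : ℝ, Rot (-t) * NormedSpace.exp (t • Jmat) = 1 := by
    have hder : ∀ t : ℝ,
        HasDerivAt (fun u => Rot (-u) * NormedSpace.exp (u • Jmat)) 0 t := by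
      intro t
      have h1 : HasDerivAt (fun u : ℝ => NormedSpace.exp (u • Jmat))
          (NormedSpace.exp (t • Jmat) * Jmat) t := hasDerivAt_exp_smul_const Jmat t
      have h2 : HasDerivAt (fun u : ℝ => Rot (-u)) ((-1 : ℝ) • (Rot (-t) * Jmat)) t := by
        exact (hRotDeriv (-t)).scomp t (hasDerivAt_neg t)
      have := h2.mul h1
      refine this.congr_deriv ?_
      have hc : Jmat * NormedSpace.exp (t • Jmat) = NormedSpace.exp (t • Jmat) * Jmat :=
        (((Commute.refl Jmat).smul_left t).exp_left).symm
      rw [neg_one_smul, neg_mul, Matrix.mul_assoc, ← hc, ← Matrix.mul_assoc]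
      abel
    intro t
    have hconst : ∀ x y : ℝ, (fun u => Rot (-u) * NormedSpace.exp (u • Jmat)) x
        = (fun u => Rot (-u) * NormedSpace.exp (u • Jmat)) y :=
      fun x y => is_const_of_deriv_eq_zero (fun u => (hder u).differentiableAt)
        (fun u => (hder u).deriv) x y
    have h0 := hconst t 0
    simpa [Rot_zero, NormedSpace.exp_zero] using h0
  have hks := key s
  calc NormedSpace.exp (s • Jmat)
      = (Rot s * Rot (-s)) * NormedSpace.exp (s • Jmat) := by
        rw [show Rot s * Rot (-s) = 1 from by simpa using Rot_neg_mul (-s), Matrix.one_mul]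
    _ = Rot s * (Rot (-s) * NormedSpace.exp (s • Jmat)) := by rw [Matrix.mul_assoc]
    _ = Rot s := by rw [hks, Matrix.mul_one]

lemma gplus_eq (C : Matrix (Fin 3) (Fin 3) ℝ) (a b : ℝ) :
    (((Rot a * C * Rot (-b)) 0 0 + (Rot a * C * Rot (-b)) 1 1 : ℝ) : ℂ)
      + Complex.I * (((Rot a * C * Rot (-b)) 1 0 - (Rot a * C * Rot (-b)) 0 1 : ℝ) : ℂ)
    = (((C 0 0 + C 1 1 : ℝ) : ℂ) + Complex.I * ((C 1 0 - C 0 1 : ℝ) : ℂ))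
        * Complex.exp ((↑(a - b)) * Complex.I) := by
  rw [Complex.exp_mul_I, ← Complex.ofReal_cos, ← Complex.ofReal_sin]
  apply Complex.ext <;>
    simp [Rot, Pmat, Jmat, Emat, Matrix.mul_apply, Fin.sum_univ_three, Matrix.vecHead,
      Matrix.vecTail, Matrix.vecMul, dotProduct, Function.comp, Real.cos_sub, Real.sin_sub,
      Complex.add_re, Complex.add_im, Complex.mul_re, Complex.mul_im] <;>
    ring

lemma gminus_eq (C : Matrix (Fin 3) (Fin 3) ℝ) (a b : ℝ) :
    (((Rot a * C * Rot (-b)) 0 0 - (Rot a * C * Rot (-b)) 1 1 : ℝ) : ℂ)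
      + Complex.I * (((Rot a * C * Rot (-b)) 1 0 + (Rot a * C * Rot (-b)) 0 1 : ℝ) : ℂ)
    = (((C 0 0 - C 1 1 : ℝ) : ℂ) + Complex.I * ((C 1 0 + C 0 1 : ℝ) : ℂ))
        * Complex.exp ((↑(a + b)) * Complex.I) := by
  rw [Complex.exp_mul_I, ← Complex.ofReal_cos, ← Complex.ofReal_sin]
  apply Complex.ext <;>
    simp [Rot, Pmat, Jmat, Emat, Matrix.mul_apply, Fin.sum_univ_three, Matrix.vecHead,
      Matrix.vecTail, Matrix.vecMul, dotProduct, Function.comp, Real.cos_add, Real.sin_add,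
      Complex.add_re, Complex.add_im, Complex.mul_re, Complex.mul_im] <;>
    ring

lemma qp_comp {k : ℕ} {ι : Type*} (ν : Fin k → ℝ) (f : ι → ℝ → ℝ)
    (hf : ∀ i, IsQuasiperiodic ν (f i)) (Φ : (ι → ℝ) → ℂ) (hΦ : Continuous Φ) :
    IsQuasiperiodic ν fun θ => Φ fun i => f i θ := by
  choose F hFc hFp hFe using hf
  refine ⟨fun z => Φ fun i => F i z, hΦ.comp (continuous_pi fun i => hFc i), ?_, ?_⟩
  · intro z j
    have h : (fun i => F i (Function.update z j (z j + 2 * Real.pi))) = fun i => F i z :=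
      funext fun i => hFp i z j
    simp only [h]
  · intro θ
    have h : (fun i => f i θ) = fun i => F i fun l => ν l * θ := funext fun i => hFe i θ
    simp only [h]


namespace QPaux

instance : Fact (0 < 2 * Real.pi) := ⟨by positivity⟩

abbrev Tor (k : ℕ) := Fin k → AddCircle (2 * Real.pi)

def tmk {k : ℕ} (x : Fin k → ℝ) : Tor k := fun i => (x i : AddCircle (2 * Real.pi))

lemma tmk_oqm {k : ℕ} : IsOpenQuotientMap (tmk (k := k)) :=
  IsOpenQuotientMap.piMap fun _ => QuotientAddGroup.isOpenQuotientMap_mk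

lemma continuous_tmk {k : ℕ} : Continuous (tmk (k := k)) := tmk_oqm.continuous

lemma periodic2pi_int {k : ℕ} (F : (Fin k → ℝ) → ℂ) (hF : Periodic2Pi F) (z : Fin k → ℝ)
    (j : Fin k) (n : ℤ) :
    F (Function.update z j (z j + (n : ℝ) * (2 * Real.pi))) = F z := by
  induction n using Int.induction_on with
  | zero => simp
  | succ n ih =>
      push_cast at ih ⊢
      have h := hF (Function.update z j (z j + (n : ℝ) * (2 * Real.pi))) j
      rw [Function.update_self, Function.update_idem] at h
      have e : z j + ((n : ℝ) + 1) * (2 * Real.pi)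
          = z j + (n : ℝ) * (2 * Real.pi) + 2 * Real.pi := by ring
      rw [e, h, ih]
  | pred n ih =>
      push_cast at ih ⊢
      have h := hF (Function.update z j (z j + (-(n : ℝ) - 1) * (2 * Real.pi))) j
      rw [Function.update_self, Function.update_idem] at h
      have e : z j + (-(n : ℝ) - 1) * (2 * Real.pi) + 2 * Real.pi
          = z j + -(n : ℝ) * (2 * Real.pi) := by ring
      rw [e] at h
      rw [← h, ih]

lemma F_inv {k : ℕ} (F : (Fin k → ℝ) → ℂ) (hF : Periodic2Pi F) (x y : Fin k → ℝ)
    (h : ∀ i, ∃ n : ℤ, y i = x i + (n : ℝ) * (2 * Real.pi)) : F y = F x := by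
  classical
  have key : ∀ s : Finset (Fin k), F (fun i => if i ∈ s then y i else x i) = F x := by
    intro s
    induction s using Finset.induction_on with
    | empty => simp
    | @insert j s hj' ih =>
        obtain ⟨n, hn⟩ := h j
        have e : (fun i => if i ∈ insert j s then y i else x i)
            = Function.update (fun i => if i ∈ s then y i else x i) j
              ((fun i => if i ∈ s then y i else x i) j + (n : ℝ) * (2 * Real.pi)) := by
          funext i
          by_cases hij : i = j
          · subst hij
            simp [hj', hn]
          · simp [Function.update_of_ne hij, hij]
        rw [e, periodic2pi_int F hF _ j n, ih]
  have := key Finset.univ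
  simpa using this

def torLift {k : ℕ} (F : (Fin k → ℝ) → ℂ) : Tor k → ℂ := fun t => F fun i => (t i).out

lemma torLift_mk {k : ℕ} (F : (Fin k → ℝ) → ℂ) (hF : Periodic2Pi F) (x : Fin k → ℝ) :
    torLift F (tmk x) = F x := by
  apply F_inv F hF
  intro i
  have h : ((x i : AddCircle (2 * Real.pi)) : AddCircle (2 * Real.pi)).out
      = (tmk x i).out := rfl
  have h2 : ((tmk x i).out : AddCircle (2 * Real.pi)) = tmk x i := Quotient.out_eq' _
  have h3 : (((x i) : ℝ) : AddCircle (2 * Real.pi)) = ((tmk x i).out : AddCircle (2 * Real.pi)) :=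
    h2.symm
  rw [QuotientAddGroup.eq] at h3
  obtain ⟨n, hn⟩ := AddSubgroup.mem_zmultiples_iff.mp h3
  refine ⟨n, ?_⟩
  have := hn
  rw [zsmul_eq_mul] at this
  linarith [this]

lemma torLift_continuous {k : ℕ} (F : (Fin k → ℝ) → ℂ) (hFc : Continuous F)
    (hF : Periodic2Pi F) : Continuous (torLift F) := by
  rw [tmk_oqm.isQuotientMap.continuous_iff]
  have : torLift F ∘ tmk = F := funext fun x => torLift_mk F hF x
  rw [this]; exact hFc

end QPaux

namespace QPaux
set_option synthInstance.maxHeartbeats 1000000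
set_option maxHeartbeats 1000000

lemma circ_coe_pow (z : Circle) (n : ℕ) : ((z ^ n : Circle) : ℂ) = (z : ℂ) ^ n := by
  induction n with
  | zero => simp
  | succ m ih => rw [pow_succ, pow_succ, Circle.coe_mul, ih]

lemma circ_coe_zpow (z : Circle) (n : ℤ) : ((z ^ n : Circle) : ℂ) = (z : ℂ) ^ n := by
  cases n with
  | ofNat m => rw [Int.ofNat_eq_coe, zpow_natCast, zpow_natCast, circ_coe_pow]
  | negSucc m => rw [zpow_negSucc, zpow_negSucc, Circle.coe_inv, circ_coe_pow]

def charP {k : ℕ} (m : Fin k → ℤ) (t : Tor k) : Circle := ∏ i, AddCircle.toCircle (t i) ^ m i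

def char {k : ℕ} (m : Fin k → ℤ) : C(Tor k, ℂ) :=
  ⟨fun t => (charP m t : ℂ), by
    apply continuous_subtype_val.comp
    exact continuous_finset_prod (M := Circle) _ fun i _ =>
      ((AddCircle.continuous_toCircle).comp (continuous_apply i)).zpow _⟩

lemma char_apply {k : ℕ} (m : Fin k → ℤ) (t : Tor k) :
    char m t = ((∏ i, AddCircle.toCircle (t i) ^ m i : Circle) : ℂ) := rfl

lemma toCircle_coe (x : ℝ) :
    AddCircle.toCircle (↑x : AddCircle (2 * Real.pi)) = Circle.exp x := by
  rw [AddCircle.toCircle_apply_mk]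
  congr 1
  rw [div_self (by positivity : (2 : ℝ) * Real.pi ≠ 0), one_mul]

lemma char_tmk {k : ℕ} (m : Fin k → ℤ) (x : Fin k → ℝ) :
    char m (tmk x) = Complex.exp ((↑(∑ i, (m i : ℝ) * x i)) * Complex.I) := by
  rw [char_apply]
  have h0 : ((∏ i, AddCircle.toCircle (tmk x i) ^ m i : Circle) : ℂ)
      = ∏ i, ((AddCircle.toCircle (tmk x i) ^ m i : Circle) : ℂ) :=
    map_prod Circle.coeHom _ _
  rw [h0]
  have h : ∀ i : Fin k, ((AddCircle.toCircle (tmk x i) ^ m i : Circle) : ℂ)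
      = Complex.exp ((m i : ℂ) * ((x i : ℂ) * Complex.I)) := by
    intro i
    simp only [tmk]
    rw [circ_coe_zpow, toCircle_coe, Circle.coe_exp, ← Complex.exp_int_mul]
  rw [Finset.prod_congr rfl fun i _ => h i, ← Complex.exp_sum]
  congr 1
  push_cast
  rw [Finset.sum_mul]
  congr 1; funext i; ring

lemma charP_mul {k : ℕ} (m m' : Fin k → ℤ) (t : Tor k) :
    charP m t * charP m' t = charP (m + m') t := by
  rw [charP, charP, charP, ← Finset.prod_mul_distrib]
  congr 1; funext i
  rw [Pi.add_apply, zpow_add]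

lemma char_mul {k : ℕ} (m m' : Fin k → ℤ) :
    char m * char m' = char (m + m') := by
  ext t
  show (charP m t : ℂ) * (charP m' t : ℂ) = (charP (m + m') t : ℂ)
  rw [← Circle.coe_mul, charP_mul]

lemma char_zero {k : ℕ} : char (0 : Fin k → ℤ) = 1 := by
  ext t
  show (charP 0 t : ℂ) = 1
  rw [charP]
  simp

lemma char_star {k : ℕ} (m : Fin k → ℤ) : star (char m) = char (-m) := by
  ext t
  show star ((charP m t : Circle) : ℂ) = ((charP (-m) t : Circle) : ℂ)
  have : (charP (-m) t : Circle) = (charP m t)⁻¹ := by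
    rw [charP, charP, ← Finset.prod_inv_distrib]
    congr 1; funext i
    rw [Pi.neg_apply, zpow_neg]
  rw [this, Circle.coe_inv_eq_conj]
  rfl

def charSpan (k : ℕ) : Submodule ℂ C(Tor k, ℂ) := Submodule.span ℂ (Set.range (char (k := k)))

lemma charSpan_mul {k : ℕ} {x y : C(Tor k, ℂ)} (hx : x ∈ charSpan k) (hy : y ∈ charSpan k) :
    x * y ∈ charSpan k := by
  induction hx using Submodule.span_induction with
  | mem a ha =>
      induction hy using Submodule.span_induction with
      | mem b hb =>
          obtain ⟨m, rfl⟩ := ha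
          obtain ⟨m', rfl⟩ := hb
          rw [char_mul]
          exact Submodule.subset_span ⟨m + m', rfl⟩
      | zero => rw [mul_zero]; exact Submodule.zero_mem _
      | add b c _ _ h1 h2 => rw [mul_add]; exact Submodule.add_mem _ h1 h2
      | smul c b _ h1 => rw [mul_smul_comm]; exact Submodule.smul_mem _ _ h1
  | zero => rw [zero_mul]; exact Submodule.zero_mem _
  | add a b _ _ h1 h2 => rw [add_mul]; exact Submodule.add_mem _ h1 h2
  | smul c a _ h1 => rw [smul_mul_assoc]; exact Submodule.smul_mem _ _ h1

def charAlg (k : ℕ) : StarSubalgebra ℂ C(Tor k, ℂ) where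
  toSubalgebra := (charSpan k).toSubalgebra
    (char_zero (k := k) ▸ Submodule.subset_span ⟨0, rfl⟩)
    (fun _ _ hx hy => charSpan_mul hx hy)
  star_mem' := by
    intro x hx
    induction hx using Submodule.span_induction with
    | mem a ha =>
        obtain ⟨m, rfl⟩ := ha
        rw [char_star]
        exact Submodule.subset_span ⟨-m, rfl⟩
    | zero => rw [star_zero]; exact Submodule.zero_mem _
    | add a b _ _ h1 h2 => rw [star_add]; exact Submodule.add_mem _ h1 h2
    | smul c a _ h1 => rw [star_smul]; exact Submodule.smul_mem _ _ h1

lemma charAlg_separates (k : ℕ) : (charAlg k).SeparatesPoints := by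
  intro t t' htt
  obtain ⟨i, hi⟩ := Function.ne_iff.mp htt
  refine ⟨_, ⟨char (Pi.single i 1), Submodule.subset_span ⟨Pi.single i 1, rfl⟩, rfl⟩, ?_⟩
  have hval : ∀ u : Tor k, char (Pi.single i 1) u = (AddCircle.toCircle (u i) : ℂ) := by
    intro u
    rw [char_apply]
    congr 1
    rw [Finset.prod_eq_single i (fun b _ hb => by simp [Pi.single_eq_of_ne hb])
      (by simp)]
    simp
    rfl
  show (char (Pi.single i 1)) t ≠ (char (Pi.single i 1)) t'
  rw [hval, hval]
  intro hc
  exact hi (AddCircle.injective_toCircle (by positivity) (Subtype.coe_injective hc))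

end QPaux

namespace QPaux
set_option maxHeartbeats 2000000
set_option synthInstance.maxHeartbeats 1000000

lemma resonance {k : ℕ} (ν : Fin k → ℝ) (α : ℝ) (z : ℂ) (hz : z ≠ 0)
    (h : IsQuasiperiodic ν fun θ : ℝ => z * Complex.exp ((α * θ : ℝ) * Complex.I)) :
    ∃ m : Fin k → ℤ, α = ∑ i, (m i : ℝ) * ν i := by
  by_contra hcon
  push_neg at hcon
  obtain ⟨F, hFc, hFp, hFe⟩ := h
  have hFbarc : Continuous (torLift F) := torLift_continuous F hFc hFp
  set Fbar : C(Tor k, ℂ) := ⟨torLift F, hFbarc⟩ with hFbar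
  have hcontP : ∀ P : C(Tor k, ℂ), Continuous fun θ : ℝ =>
      P (tmk fun i => ν i * θ) * Complex.exp ((-(α * θ) : ℝ) * Complex.I) := by
    intro P
    apply Continuous.mul
    · exact P.continuous.comp (continuous_tmk.comp
        (continuous_pi fun i => continuous_const.mul continuous_id))
    · exact Continuous.cexp ((Complex.continuous_ofReal.comp
        ((continuous_const.mul continuous_id).neg)).mul continuous_const)
  have hint : ∀ (P : C(Tor k, ℂ)) (T : ℝ), IntervalIntegrable
      (fun θ : ℝ => P (tmk fun i => ν i * θ) * Complex.exp ((-(α * θ) : ℝ) * Complex.I))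
      MeasureTheory.volume 0 T := fun P T => (hcontP P).intervalIntegrable 0 T
  have hzero : ∀ P ∈ charSpan k, Filter.Tendsto (fun T : ℝ =>
      (∫ θ in (0:ℝ)..T, P (tmk fun i => ν i * θ)
        * Complex.exp ((-(α * θ) : ℝ) * Complex.I)) / (T : ℂ))
      Filter.atTop (nhds 0) := by
    intro P hP
    induction hP using Submodule.span_induction with
    | mem P hPm =>
        obtain ⟨m, rfl⟩ := hPm
        have hβ0 : (∑ i, (m i : ℝ) * ν i) - α ≠ 0 := sub_ne_zero.mpr fun hh => hcon m hh.symm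
        have hc0 : ((((∑ i, (m i : ℝ) * ν i) - α : ℝ) : ℂ) * Complex.I) ≠ 0 :=
          mul_ne_zero (Complex.ofReal_ne_zero.mpr hβ0) Complex.I_ne_zero
        have hinteg : ∀ T : ℝ,
            (∫ θ in (0:ℝ)..T, (char m) (tmk fun i => ν i * θ)
              * Complex.exp ((-(α * θ) : ℝ) * Complex.I))
            = (Complex.exp ((((∑ i, (m i : ℝ) * ν i) - α : ℝ) : ℂ) * Complex.I * T) - 1)
              / ((((∑ i, (m i : ℝ) * ν i) - α : ℝ) : ℂ) * Complex.I) := by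
          intro T
          have e1 : ∀ θ : ℝ, (char m) (tmk fun i => ν i * θ)
              * Complex.exp ((-(α * θ) : ℝ) * Complex.I)
              = Complex.exp (((((∑ i, (m i : ℝ) * ν i) - α : ℝ) : ℂ) * Complex.I) * θ) := by
            intro θ
            rw [char_tmk, ← Complex.exp_add]
            congr 1
            have hre : ∑ i, (m i : ℝ) * (ν i * θ) = (∑ i, (m i : ℝ) * ν i) * θ := by
              rw [Finset.sum_mul]
              exact Finset.sum_congr rfl fun i _ => by ring
            rw [hre]
            push_cast
            ring
          rw [intervalIntegral.integral_congr (fun θ _ => e1 θ)]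
          rw [integral_exp_mul_complex hc0]
          rw [Complex.ofReal_zero, mul_zero, Complex.exp_zero]
        have hbound : ∀ T : ℝ, 1 ≤ T →
            ‖(∫ θ in (0:ℝ)..T, (char m) (tmk fun i => ν i * θ)
              * Complex.exp ((-(α * θ) : ℝ) * Complex.I)) / (T : ℂ)‖
            ≤ (2 / |(∑ i, (m i : ℝ) * ν i) - α|) / T := by
          intro T hT
          rw [hinteg T, norm_div, norm_div]
          have h1 : ‖Complex.exp ((((∑ i, (m i : ℝ) * ν i) - α : ℝ) : ℂ) * Complex.I * T) - 1‖
              ≤ 2 := by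
            calc ‖Complex.exp ((((∑ i, (m i : ℝ) * ν i) - α : ℝ) : ℂ) * Complex.I * T) - 1‖
                ≤ ‖Complex.exp ((((∑ i, (m i : ℝ) * ν i) - α : ℝ) : ℂ) * Complex.I * T)‖
                  + ‖(1 : ℂ)‖ := norm_sub_le _ _
              _ ≤ 2 := by
                  have : ((((∑ i, (m i : ℝ) * ν i) - α : ℝ) : ℂ) * Complex.I * T)
                      = ((((∑ i, (m i : ℝ) * ν i) - α) * T : ℝ) : ℂ) * Complex.I := by
                    push_cast; ring
                  rw [this, Complex.norm_exp_ofReal_mul_I]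
                  norm_num
          have h2 : ‖(((∑ i, (m i : ℝ) * ν i) - α : ℝ) : ℂ) * Complex.I‖
              = |(∑ i, (m i : ℝ) * ν i) - α| := by
            rw [norm_mul, Complex.norm_I, mul_one, Complex.norm_real, Real.norm_eq_abs]
          have h3 : ‖(T : ℂ)‖ = T := by
            rw [Complex.norm_real, Real.norm_eq_abs, abs_of_pos (by linarith)]
          rw [h2, h3, div_div]
          apply div_le_div_of_nonneg_right h1 ?_ |>.trans_eq ?_
          · positivity
          · ring
        have hg : Filter.Tendsto (fun T : ℝ => 2 / |(∑ i, (m i : ℝ) * ν i) - α| / T)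
            Filter.atTop (nhds 0) :=
          Filter.Tendsto.div_atTop tendsto_const_nhds Filter.tendsto_id
        exact squeeze_zero_norm'
          (by filter_upwards [Filter.eventually_ge_atTop (1 : ℝ)] with T hT using hbound T hT) hg
    | zero =>
        simp only [ContinuousMap.zero_apply, zero_mul, intervalIntegral.integral_zero, zero_div]
        exact tendsto_const_nhds
    | add P Q hPm hQm ihP ihQ =>
        have : ∀ T : ℝ, (∫ θ in (0:ℝ)..T, (P + Q) (tmk fun i => ν i * θ)
              * Complex.exp ((-(α * θ) : ℝ) * Complex.I)) / (T : ℂ)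
            = (∫ θ in (0:ℝ)..T, P (tmk fun i => ν i * θ)
              * Complex.exp ((-(α * θ) : ℝ) * Complex.I)) / (T : ℂ)
            + (∫ θ in (0:ℝ)..T, Q (tmk fun i => ν i * θ)
              * Complex.exp ((-(α * θ) : ℝ) * Complex.I)) / (T : ℂ) := by
          intro T
          rw [← add_div]
          congr 1
          rw [← intervalIntegral.integral_add (hint P T) (hint Q T)]
          apply intervalIntegral.integral_congr
          intro θ _
          simp [ContinuousMap.add_apply, add_mul]
        simp only [this]
        simpa using ihP.add ihQ
    | smul c P hPm ihP =>
        have : ∀ T : ℝ, (∫ θ in (0:ℝ)..T, (c • P) (tmk fun i => ν i * θ)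
              * Complex.exp ((-(α * θ) : ℝ) * Complex.I)) / (T : ℂ)
            = c * ((∫ θ in (0:ℝ)..T, P (tmk fun i => ν i * θ)
              * Complex.exp ((-(α * θ) : ℝ) * Complex.I)) / (T : ℂ)) := by
          intro T
          rw [← mul_div_assoc]
          congr 1
          rw [← intervalIntegral.integral_const_mul]
          apply intervalIntegral.integral_congr
          intro θ _
          simp [ContinuousMap.smul_apply, smul_eq_mul, mul_assoc]
        simp only [this]
        simpa using ihP.const_mul c
  -- density
  have htop := ContinuousMap.starSubalgebra_topologicalClosure_eq_top_of_separatesPoints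
    (charAlg k) (charAlg_separates k)
  have hFtop : Fbar ∈ (charAlg k).topologicalClosure := by rw [htop]; exact StarSubalgebra.mem_top
  have hFcl : Fbar ∈ closure ((charAlg k : Set C(Tor k, ℂ))) := hFtop
  have hε : (0 : ℝ) < ‖z‖ / 2 := by
    have := norm_pos_iff.mpr hz
    linarith
  obtain ⟨P, hPmem, hPdist⟩ := Metric.mem_closure_iff.mp hFcl (‖z‖ / 2) hε
  have hPspan : P ∈ charSpan k := hPmem
  -- z equals F-mean
  have hFmean : ∀ T : ℝ, 0 < T →
      (∫ θ in (0:ℝ)..T, Fbar (tmk fun i => ν i * θ)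
        * Complex.exp ((-(α * θ) : ℝ) * Complex.I)) / (T : ℂ) = z := by
    intro T hT
    have hconst : ∀ θ : ℝ, Fbar (tmk fun i => ν i * θ)
        * Complex.exp ((-(α * θ) : ℝ) * Complex.I) = z := by
      intro θ
      have hFeq : Fbar (tmk fun i => ν i * θ) = z * Complex.exp ((α * θ : ℝ) * Complex.I) := by
        show torLift F (tmk fun i => ν i * θ) = _
        rw [torLift_mk F hFp]
        exact (hFe θ).symm
      rw [hFeq, mul_assoc, ← Complex.exp_add]
      have : ((α * θ : ℝ) : ℂ) * Complex.I + ((-(α * θ) : ℝ) : ℂ) * Complex.I = 0 := by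
        push_cast; ring
      rw [this, Complex.exp_zero, mul_one]
    rw [intervalIntegral.integral_congr fun θ _ => hconst θ]
    rw [intervalIntegral.integral_const, sub_zero, Complex.real_smul]
    exact mul_div_cancel_left₀ z (Complex.ofReal_ne_zero.mpr (ne_of_gt hT))
  -- error bound
  have herr : ∀ T : ℝ, 0 < T →
      ‖z - (∫ θ in (0:ℝ)..T, P (tmk fun i => ν i * θ)
        * Complex.exp ((-(α * θ) : ℝ) * Complex.I)) / (T : ℂ)‖ ≤ dist Fbar P := by
    intro T hT
    rw [← hFmean T hT, div_sub_div_same]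
    rw [← intervalIntegral.integral_sub (hint Fbar T) (hint P T)]
    rw [norm_div]
    have hTn : ‖(T : ℂ)‖ = T := by
      rw [Complex.norm_real, Real.norm_eq_abs, abs_of_pos hT]
    rw [hTn]
    have hb : ‖∫ θ in (0:ℝ)..T, (Fbar (tmk fun i => ν i * θ)
          * Complex.exp ((-(α * θ) : ℝ) * Complex.I)
        - P (tmk fun i => ν i * θ) * Complex.exp ((-(α * θ) : ℝ) * Complex.I))‖
        ≤ dist Fbar P * |T - 0| := by
      apply intervalIntegral.norm_integral_le_of_norm_le_const
      intro x hx
      rw [← sub_mul, norm_mul, Complex.norm_exp_ofReal_mul_I, mul_one, ← dist_eq_norm]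
      exact ContinuousMap.dist_apply_le_dist _
    calc ‖∫ θ in (0:ℝ)..T, (Fbar (tmk fun i => ν i * θ)
            * Complex.exp ((-(α * θ) : ℝ) * Complex.I)
          - P (tmk fun i => ν i * θ) * Complex.exp ((-(α * θ) : ℝ) * Complex.I))‖ / T
        ≤ (dist Fbar P * |T - 0|) / T := by gcongr
      _ = dist Fbar P := by
          rw [sub_zero, abs_of_pos hT, mul_div_assoc, div_self (ne_of_gt hT), mul_one]
  -- conclude
  have hlim := hzero P hPspan
  have hlim2 : Filter.Tendsto (fun T : ℝ => ‖z - (∫ θ in (0:ℝ)..T, P (tmk fun i => ν i * θ)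
      * Complex.exp ((-(α * θ) : ℝ) * Complex.I)) / (T : ℂ)‖) Filter.atTop (nhds ‖z‖) := by
    have := (tendsto_const_nhds (x := z) (f := Filter.atTop (α := ℝ))).sub hlim
    rw [sub_zero] at this
    exact this.norm
  have hfinal : ‖z‖ ≤ dist Fbar P := by
    apply le_of_tendsto hlim2
    filter_upwards [Filter.eventually_gt_atTop (0 : ℝ)] with T hT
    exact herr T hT
  have : dist Fbar P < ‖z‖ / 2 := hPdist
  have : ‖z‖ > 0 := norm_pos_iff.mpr hz
  linarith

end QPaux


lemma qp_entry_comb {d : ℕ} (ω : Fin d → ℝ) (U Uh : ℝ → Matrix (Fin 3) (Fin 3) ℝ)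
    (hUqp : ∀ i j, IsQuasiperiodic (oneOmega ω) fun θ => U θ i j)
    (hUhqp : ∀ i j, IsQuasiperiodic (oneOmega ω) fun θ => Uh θ i j) (s₁ s₂ : ℝ) :
    IsQuasiperiodic (oneOmega ω) fun θ =>
      ((((Uh θ).transpose * U θ) 0 0 + s₁ * (((Uh θ).transpose * U θ) 1 1) : ℝ) : ℂ)
        + Complex.I * ((((Uh θ).transpose * U θ) 1 0
          + s₂ * (((Uh θ).transpose * U θ) 0 1) : ℝ) : ℂ) := by
  have hWf : ∀ (θ : ℝ) (i j : Fin 3),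
      ((Uh θ).transpose * U θ) i j = ∑ k, Uh θ k i * U θ k j := by
    intro θ i j
    rw [Matrix.mul_apply]
    simp [Matrix.transpose_apply]
  have h := qp_comp (ι := Fin 3 × Fin 3 × Bool) (oneOmega ω)
    (fun p θ => cond p.2.2 (U θ p.1 p.2.1) (Uh θ p.1 p.2.1))
    (fun p => by
      rcases p with ⟨i, j, b⟩
      cases b
      · exact hUhqp i j
      · exact hUqp i j)
    (fun v => (((∑ k, v (k, 0, false) * v (k, 0, true))
        + s₁ * ∑ k, v (k, 1, false) * v (k, 1, true) : ℝ) : ℂ)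
      + Complex.I * (((∑ k, v (k, 1, false) * v (k, 0, true))
        + s₂ * ∑ k, v (k, 0, false) * v (k, 1, true) : ℝ) : ℂ))
    (by fun_prop)
  have heq : (fun θ : ℝ =>
      ((((Uh θ).transpose * U θ) 0 0 + s₁ * (((Uh θ).transpose * U θ) 1 1) : ℝ) : ℂ)
        + Complex.I * ((((Uh θ).transpose * U θ) 1 0
          + s₂ * (((Uh θ).transpose * U θ) 0 1) : ℝ) : ℂ))
      = fun θ : ℝ => (((∑ k, Uh θ k 0 * U θ k 0)
        + s₁ * ∑ k, Uh θ k 1 * U θ k 1 : ℝ) : ℂ)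
      + Complex.I * (((∑ k, Uh θ k 1 * U θ k 0)
        + s₂ * ∑ k, Uh θ k 0 * U θ k 1 : ℝ) : ℂ) := by
    funext θ
    simp only [hWf]
  rw [heq]
  exact h


/-- Theorem 5.3. -/
theorem proper_UPRs_equivalent {d : ℕ} (hd : 1 ≤ d) (ω : Fin d → ℝ)
    (A : ℝ → Matrix (Fin 3) (Fin 3) ℝ)
    (hAcont : ∀ i j, Continuous fun θ => A θ i j)
    (hAskew : ∀ θ, (A θ).transpose = -(A θ))
    (Φ : ℝ → Matrix (Fin 3) (Fin 3) ℝ) (hΦ0 : Φ 0 = 1)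
    (hΦ : ∀ (θ : ℝ) (i j : Fin 3), HasDerivAt (fun t => Φ t i j) ((A θ * Φ θ) i j) θ)
    (U Uh : ℝ → Matrix (Fin 3) (Fin 3) ℝ)
    (hUSO3 : ∀ θ, U θ ∈ SO3) (hUhSO3 : ∀ θ, Uh θ ∈ SO3)
    (hUqp : ∀ i j, IsQuasiperiodic (oneOmega ω) fun θ => U θ i j)
    (hUhqp : ∀ i j, IsQuasiperiodic (oneOmega ω) fun θ => Uh θ i j)
    (νU νUh : ℝ) (hνU : νU ∈ Set.Ico (0 : ℝ) 1) (hνUh : νUh ∈ Set.Ico (0 : ℝ) 1)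
    (hrepU : ∀ θ, Φ θ = U θ * NormedSpace.exp ((νU * θ) • Jmat) * (U 0).transpose)
    (hrepUh : ∀ θ, Φ θ = Uh θ * NormedSpace.exp ((νUh * θ) • Jmat) * (Uh 0).transpose) :
    ∃ (ε : ℝ) (m : Fin (d + 1) → ℤ), (ε = 1 ∨ ε = -1) ∧
      νUh = ε * νU + zdot m (oneOmega ω) := by
    classical
  set Cm := (Uh 0).transpose * U 0 with hCmdef
  have h1U0 : (U 0).transpose * U 0 = 1 := (hUSO3 0).1
  have h2Uh0 : Uh 0 * (Uh 0).transpose = 1 := mul_eq_one_comm.mp (hUhSO3 0).1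
  have hC1 : Cm.transpose * Cm = 1 := by
    rw [hCmdef, Matrix.transpose_mul, Matrix.transpose_transpose, Matrix.mul_assoc,
      ← Matrix.mul_assoc (Uh 0) (Uh 0).transpose (U 0), h2Uh0, Matrix.one_mul, h1U0]
  have hW2 : ∀ θ : ℝ, (Uh θ).transpose * U θ = Rot (νUh * θ) * Cm * Rot (-(νU * θ)) := by
    intro θ
    have h := (hrepU θ).symm.trans (hrepUh θ)
    rw [expJ, expJ] at h
    have h2 : (Uh θ).transpose * Uh θ = 1 := (hUhSO3 θ).1
    have h3 := congrArg (fun M => (Uh θ).transpose * M * U 0) h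
    simp only [Matrix.mul_assoc] at h3
    rw [h1U0, Matrix.mul_one] at h3
    rw [← Matrix.mul_assoc ((Uh θ).transpose) (Uh θ), h2, Matrix.one_mul] at h3
    have hrot1 : Rot (νU * θ) * Rot (-(νU * θ)) = 1 := by
      simpa using Rot_neg_mul (-(νU * θ))
    calc (Uh θ).transpose * U θ
        = (Uh θ).transpose * (U θ * (Rot (νU * θ) * Rot (-(νU * θ)))) := by
          rw [hrot1, Matrix.mul_one]
      _ = ((Uh θ).transpose * (U θ * Rot (νU * θ))) * Rot (-(νU * θ)) := by
          simp only [Matrix.mul_assoc]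
      _ = (Rot (νUh * θ) * (Cm)) * Rot (-(νU * θ)) := by rw [h3, hCmdef, Matrix.mul_assoc]
  -- entry identities of CᵀC = 1
  have e00 : Cm 0 0 * Cm 0 0 + Cm 1 0 * Cm 1 0 + Cm 2 0 * Cm 2 0 = 1 := by
    have := congrArg (fun M => M 0 0) hC1
    simpa [Matrix.mul_apply, Matrix.transpose_apply, Fin.sum_univ_three, Matrix.one_apply]
      using this
  have e11 : Cm 0 1 * Cm 0 1 + Cm 1 1 * Cm 1 1 + Cm 2 1 * Cm 2 1 = 1 := by
    have := congrArg (fun M => M 1 1) hC1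
    simpa [Matrix.mul_apply, Matrix.transpose_apply, Fin.sum_univ_three, Matrix.one_apply]
      using this
  have e01 : Cm 0 0 * Cm 0 1 + Cm 1 0 * Cm 1 1 + Cm 2 0 * Cm 2 1 = 0 := by
    have := congrArg (fun M => M 0 1) hC1
    simpa [Matrix.mul_apply, Matrix.transpose_apply, Fin.sum_univ_three, Matrix.one_apply]
      using this
  by_cases hzp : (((Cm 0 0 + Cm 1 1 : ℝ) : ℂ) + Complex.I * ((Cm 1 0 - Cm 0 1 : ℝ) : ℂ)) = 0
  · -- z₊ = 0, so z₋ ≠ 0 : use ε = -1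
    have hzpc : Cm 0 0 + Cm 1 1 = 0 ∧ Cm 1 0 - Cm 0 1 = 0 := by
      constructor
      · have := congrArg Complex.re hzp
        simpa using this
      · have := congrArg Complex.im hzp
        simpa using this
    have hzm : (((Cm 0 0 - Cm 1 1 : ℝ) : ℂ) + Complex.I * ((Cm 1 0 + Cm 0 1 : ℝ) : ℂ)) ≠ 0 := by
      intro hzm0
      have hzmc : Cm 0 0 - Cm 1 1 = 0 ∧ Cm 1 0 + Cm 0 1 = 0 := by
        constructor
        · have := congrArg Complex.re hzm0
          simpa using this
        · have := congrArg Complex.im hzm0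
          simpa using this
      have c00 : Cm 0 0 = 0 := by linarith [hzpc.1, hzpc.2, hzmc.1, hzmc.2]
      have c11 : Cm 1 1 = 0 := by linarith [hzpc.1, hzpc.2, hzmc.1, hzmc.2]
      have c10 : Cm 1 0 = 0 := by linarith [hzpc.1, hzpc.2, hzmc.1, hzmc.2]
      have c01 : Cm 0 1 = 0 := by linarith [hzpc.1, hzpc.2, hzmc.1, hzmc.2]
      have h20 : Cm 2 0 * Cm 2 0 = 1 := by nlinarith [e00, c00, c10]
      have h21 : Cm 2 1 * Cm 2 1 = 1 := by nlinarith [e11, c01, c11]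
      have h2021 : Cm 2 0 * Cm 2 1 = 0 := by nlinarith [e01, c00, c01, c10, c11]
      have hne : Cm 2 0 ≠ 0 := by
        intro h0
        rw [h0, zero_mul] at h20
        norm_num at h20
      have hc21 : Cm 2 1 = 0 := by
        rcases mul_eq_zero.mp h2021 with h | h
        · exact absurd h hne
        · exact h
      rw [hc21, zero_mul] at h21
      norm_num at h21
    have hqp := qp_entry_comb ω U Uh hUqp hUhqp (-1) 1
    have hfun : (fun θ : ℝ =>
        ((((Uh θ).transpose * U θ) 0 0 + (-1 : ℝ) * (((Uh θ).transpose * U θ) 1 1) : ℝ) : ℂ)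
          + Complex.I * ((((Uh θ).transpose * U θ) 1 0
            + (1 : ℝ) * (((Uh θ).transpose * U θ) 0 1) : ℝ) : ℂ))
        = fun θ : ℝ => (((Cm 0 0 - Cm 1 1 : ℝ) : ℂ) + Complex.I * ((Cm 1 0 + Cm 0 1 : ℝ) : ℂ))
            * Complex.exp ((((νUh + νU) * θ : ℝ) : ℂ) * Complex.I) := by
      funext θ
      have h' := gminus_eq Cm (νUh * θ) (νU * θ)
      rw [show νUh * θ + νU * θ = (νUh + νU) * θ from by ring] at h'
      rw [hW2 θ, ← h']
      push_cast
      ring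
    rw [hfun] at hqp
    obtain ⟨m, hm⟩ := QPaux.resonance (oneOmega ω) (νUh + νU) _ hzm hqp
    refine ⟨-1, m, Or.inr rfl, ?_⟩
    show νUh = -1 * νU + zdot m (oneOmega ω)
    rw [zdot]
    linarith [hm]
  · -- z₊ ≠ 0 : use ε = 1
    have hqp := qp_entry_comb ω U Uh hUqp hUhqp 1 (-1)
    have hfun : (fun θ : ℝ =>
        ((((Uh θ).transpose * U θ) 0 0 + (1 : ℝ) * (((Uh θ).transpose * U θ) 1 1) : ℝ) : ℂ)
          + Complex.I * ((((Uh θ).transpose * U θ) 1 0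
            + (-1 : ℝ) * (((Uh θ).transpose * U θ) 0 1) : ℝ) : ℂ))
        = fun θ : ℝ => (((Cm 0 0 + Cm 1 1 : ℝ) : ℂ) + Complex.I * ((Cm 1 0 - Cm 0 1 : ℝ) : ℂ))
            * Complex.exp ((((νUh - νU) * θ : ℝ) : ℂ) * Complex.I) := by
      funext θ
      have h' := gplus_eq Cm (νUh * θ) (νU * θ)
      rw [show νUh * θ - νU * θ = (νUh - νU) * θ from by ring] at h'
      rw [hW2 θ, ← h']
      push_cast
      ring
    rw [hfun] at hqp
    obtain ⟨m, hm⟩ := QPaux.resonance (oneOmega ω) (νUh - νU) _ hzp hqp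
    refine ⟨1, m, Or.inl rfl, ?_⟩
    show νUh = 1 * νU + zdot m (oneOmega ω)
    rw [zdot]
    linarith [hm]
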